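/- Let G = (V, E) be a finite simple graph, let f : E → ℝ be nonnegative edge weights, and let D, c ≥ 0 be real numbers such that the sum of f over the edges incident to v is at most D for every vertex v, and f(e) ≤ c for every edge e. Then for every subset U ⊆ V of odd cardinality, the sum of f over the edges of G with both endpoints in U is at most ⌊|U|/2⌋·(D + c). -/

import Mathlib

open Finset

/-- Fractional Vizing-type inequality. If nonnegative edge weights `f` have
vertex load at most `D` at every vertex and `f e ≤ c` on every edge (with `D, c ≥ 0`), then
for every odd vertex subset `U`, the sum of `f` over the edges with both endpoints in `U` is
at most `⌊|U|/2⌋ · (D + c)`. -/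
theorem fractional_vizing_odd_set_bound
    {V : Type*} [Fintype V] [DecidableEq V]
    (G : SimpleGraph V) [DecidableRel G.Adj] (f : Sym2 V → ℝ)
    (D c : ℝ) (hD : 0 ≤ D) (hc : 0 ≤ c)
    (h₀ : ∀ e ∈ G.edgeFinset, 0 ≤ f e)
    (hload : ∀ v : V, ∑ e ∈ G.incidenceFinset v, f e ≤ D)
    (hcap : ∀ e ∈ G.edgeFinset, f e ≤ c) :
    ∀ U : Finset V, Odd U.card →
      ∑ e ∈ G.edgeFinset.filter (fun e => ∀ x ∈ e, x ∈ U), f e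
        ≤ ((U.card / 2 : ℕ) : ℝ) * (D + c) := by
  intro U hU
  obtain ⟨m, hm⟩ := hU
  set T := G.edgeFinset.filter (fun e => ∀ x ∈ e, x ∈ U) with hT
  have hT0 : ∀ e ∈ T, 0 ≤ f e := fun e he => h₀ e (mem_filter.mp he).1
  -- per-vertex bound
  have key : ∀ v ∈ U, ∑ e ∈ T.filter (fun e => v ∈ e), f e ≤ min D (2*m*c) := by
    intro v hv
    refine le_min ?_ ?_
    · refine le_trans (sum_le_sum_of_subset_of_nonneg ?_ ?_) (hload v)
      · intro e he
        simp only [hT, mem_filter] at he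
        rw [SimpleGraph.mem_incidenceFinset]
        exact ⟨(SimpleGraph.mem_edgeFinset.mp he.1.1), he.2⟩
      · intro e he _
        exact h₀ e (by rw [SimpleGraph.incidenceFinset_eq_filter] at he; exact (mem_filter.mp he).1)
    · have hsub : T.filter ( fun e => v ∈ e) ⊆ (U.erase v).image (fun w => s(v,w)) := by
        intro e he
        simp only [hT, mem_filter] at he
        obtain ⟨⟨he1, he2⟩, hv'⟩ := he
        have hnd : ¬ e.IsDiag := G.not_isDiag_of_mem_edgeSet (SimpleGraph.mem_edgeFinset.mp he1)
        have hw : (Sym2.Mem.other' hv') ∈ U := he2 _ (Sym2.other_mem' hv')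
        have hne : (Sym2.Mem.other' hv') ≠ v := by
          intro h
          apply hnd
          rw [← Sym2.other_spec' hv', h]
          exact Sym2.isDiag_iff_proj_eq.mpr rfl
        refine mem_image.mpr ⟨Sym2.Mem.other' hv', mem_erase.mpr ⟨hne, hw⟩, ?_⟩
        rw [Sym2.other_spec' hv']
      calc ∑ e ∈ T.filter (fun e => v ∈ e), f e
          ≤ ∑ e ∈ T.filter (fun e => v ∈ e), c := by
            refine sum_le_sum ?_
            intro e he
            exact hcap e (mem_filter.mp (mem_filter.mp he).1).1
        _ = (T.filter (fun e => v ∈ e)).card * c := by rw [sum_const, nsmul_eq_mul]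
        _ ≤ ((2*m : ℕ) : ℝ) * c := by
            refine mul_le_mul_of_nonneg_right ?_ hc
            have h1 : (T.filter (fun e => v ∈ e)).card ≤ (U.erase v).card :=
              le_trans (card_le_card hsub) card_image_le
            have h2 : (U.erase v).card = 2*m := by
              rw [card_erase_of_mem hv, hm]; omega
            exact_mod_cast h1.trans_eq h2
        _ = 2*m*c := by push_cast; ring
  -- double counting
  have hdc : ∑ v ∈ U, ∑ e ∈ T.filter (fun e => v ∈ e), f e = 2 * ∑ e ∈ T, f e := by
    have hc1 : ∀ v ∈ U, ∑ e ∈ T.filter (fun e => v ∈ e), f e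
        = ∑ e ∈ T, if v ∈ e then f e else 0 := fun v _ => sum_filter _ _
    rw [sum_congr rfl hc1, sum_comm, mul_sum]
    refine sum_congr rfl ?_
    intro e he
    induction e using Sym2.ind with
    | _ a b =>
      simp only [hT, mem_filter] at he
      obtain ⟨he1, he2⟩ := he
      have hnd : ¬ (s(a,b) : Sym2 V).IsDiag :=
        G.not_isDiag_of_mem_edgeSet (SimpleGraph.mem_edgeFinset.mp he1)
      have hab : a ≠ b := by simpa using hnd
      have ha : a ∈ U := he2 a (by simp)
      have hb : b ∈ U := he2 b (by simp)
      rw [← sum_filter]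
      have hfil : U.filter (fun v => v ∈ (s(a,b) : Sym2 V)) = {a, b} := by
        ext v
        simp only [mem_filter, Sym2.mem_iff, mem_insert, mem_singleton]
        constructor
        · rintro ⟨_, h⟩; exact h
        · rintro (rfl | rfl)
          · exact ⟨ha, Or.inl rfl⟩
          · exact ⟨hb, Or.inr rfl⟩
      rw [hfil, sum_pair hab]
      ring
  -- conclude
  have hsum : 2 * ∑ e ∈ T, f e ≤ (2*m+1) * min D (2*m*c) := by
    rw [← hdc]
    calc ∑ v ∈ U, ∑ e ∈ T.filter (fun e => v ∈ e), f e
        ≤ ∑ _v ∈ U, min D (2*m*c) := sum_le_sum key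
      _ = U.card * min D (2*m*c) := by rw [sum_const, nsmul_eq_mul]
      _ = (2*m+1) * min D (2*m*c) := by rw [hm]; push_cast; ring
  have hm2 : ((U.card / 2 : ℕ) : ℝ) = m := by rw [hm]; norm_num [Nat.add_mul_div_left]; omega
  rw [hm2]
  have hmnn : (0:ℝ) ≤ m := by positivity
  rcases le_total D (2*m*c) with h | h
  · rw [min_eq_left h] at hsum
    nlinarith
  · rw [min_eq_right h] at hsum
    nlinarith
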